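/- Let X be a normed linear space with a Gâteaux differentiable norm and let f:[a,b]→X be twice differentiable on [a,b]. Then f'(x)=0 for every x∈K_f. -/

import Mathlib

open Set MeasureTheory
open scoped ENNReal NNReal

/-- The real-valued variation function `v_f(x) = V(f,[a,x])`. -/
noncomputable def vfn {X : Type*} [NormedAddCommGroup X] (f : ℝ → X) (a x : ℝ) : ℝ :=
  (eVariationOn f (Set.Icc a x)).toReal

/-- The fractional variation `V_α(g, K)`: the supremum of sums
`Σ |g(b_i) - g(a_i)|^α` over finite collections of non-overlapping intervals
`[a_i, b_i]` with endpoints in `K`. -/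
noncomputable def fracVar (α : ℝ) (g : ℝ → ℝ) (K : Set ℝ) : ℝ≥0∞ :=
  ⨆ (m : ℕ) (p : Fin m → ℝ × ℝ)
    (_ : ∀ i, (p i).1 ∈ K ∧ (p i).2 ∈ K ∧ (p i).1 ≤ (p i).2)
    (_ : ∀ i j, i < j → (p i).2 ≤ (p j).1),
    ∑ i, ENNReal.ofReal (|g (p i).2 - g (p i).1| ^ α)

/-- `g` is twice differentiable on `[a,b]` (unilateral derivatives at the endpoints). -/
def TwiceDiffOn {X : Type*} [NormedAddCommGroup X] [NormedSpace ℝ X]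
    (g : ℝ → X) (a b : ℝ) : Prop :=
  ∃ g' g'' : ℝ → X,
    (∀ x ∈ Set.Icc a b, HasDerivWithinAt g (g' x) (Set.Icc a b) x) ∧
    (∀ x ∈ Set.Icc a b, HasDerivWithinAt g' (g'' x) (Set.Icc a b) x)

/-- `f` restricted to `[c,d]` admits an arc-length parametrization which is
twice differentiable: `f` has bounded variation on `[c,d]` and there is a twice
differentiable `g` on `[0, V(f,[c,d])]` with `g ∘ v_f = f` on `[c,d]`. -/
def HasC2ArcLengthParam {X : Type*} [NormedAddCommGroup X] [NormedSpace ℝ X]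
    (f : ℝ → X) (c d : ℝ) : Prop :=
  BoundedVariationOn f (Set.Icc c d) ∧
  ∃ g : ℝ → X, TwiceDiffOn g 0 (vfn f c d) ∧ ∀ x ∈ Set.Icc c d, g (vfn f c x) = f x

/-- The set `K_f` of points `x ∈ [a,b]` such that there is no open interval `U ∋ x`
such that `f` restricted to `closure U ∩ [a,b]` is either constant or admits a twice
differentiable arc-length parametrization. -/
def Kset {X : Type*} [NormedAddCommGroup X] [NormedSpace ℝ X]
    (f : ℝ → X) (a b : ℝ) : Set ℝ :=
  {x : ℝ | x ∈ Set.Icc a b ∧ ¬ ∃ c d : ℝ, c < x ∧ x < d ∧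
    ((∀ y ∈ Set.Icc (max c a) (min d b), ∀ z ∈ Set.Icc (max c a) (min d b), f y = f z) ∨
     HasC2ArcLengthParam f (max c a) (min d b))}

/-- `f : [a,b] → X` is `VBG_{1/2}`: `f` has bounded variation and `K_f` is a countable
union of closed sets `A m` with `V_{1/2}(v_f, A m) < ∞`. -/
def VBGHalf {X : Type*} [NormedAddCommGroup X] [NormedSpace ℝ X]
    (f : ℝ → X) (a b : ℝ) : Prop :=
  BoundedVariationOn f (Set.Icc a b) ∧
  ∃ A : ℕ → Set ℝ,
    (∀ m, IsClosed (A m) ∧ A m ⊆ Set.Icc a b ∧ fracVar (1/2) (vfn f a) (A m) < ⊤) ∧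
    Kset f a b = ⋃ m, A m

/-- `f` is Lebesgue equivalent to `g` on `[a,b]`: `g = f ∘ h` for some homeomorphism
`h` of `[a,b]` onto itself. -/
def LebEquiv {X : Type*} [NormedAddCommGroup X] [NormedSpace ℝ X]
    (f g : ℝ → X) (a b : ℝ) : Prop :=
  ∃ h : ℝ → ℝ, ContinuousOn h (Set.Icc a b) ∧
    Set.BijOn h (Set.Icc a b) (Set.Icc a b) ∧
    ∀ x ∈ Set.Icc a b, g x = f (h x)

/-- `φ` is pointwise Lipschitz on `s`: at every `x ∈ s` the difference quotients of
`φ` are bounded near `x`. -/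
def PtwiseLipschitzOn {X : Type*} [NormedAddCommGroup X]
    (φ : ℝ → X) (s : Set ℝ) : Prop :=
  ∀ x ∈ s, ∃ C : ℝ, ∃ δ > 0, ∀ y ∈ s, |y - x| < δ → ‖φ y - φ x‖ ≤ C * |y - x|

/-- The norm of `X` is Gâteaux differentiable away from `0`. -/
def GateauxSmoothNorm (X : Type*) [NormedAddCommGroup X] [NormedSpace ℝ X] : Prop :=
  ∀ x : X, x ≠ 0 → ∃ L : X →L[ℝ] ℝ, ∀ v : X, HasLineDerivAt ℝ (fun y : X => ‖y‖) (L v) x v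

/-- `g` is absolutely continuous on `[a,b]` (ε-δ definition with finite collections of
non-overlapping intervals). -/
def AbsContOn (g : ℝ → ℝ) (a b : ℝ) : Prop :=
  ∀ ε > 0, ∃ δ > 0, ∀ n : ℕ, ∀ p : Fin n → ℝ × ℝ,
    (∀ i, (p i).1 ∈ Set.Icc a b ∧ (p i).2 ∈ Set.Icc a b ∧ (p i).1 ≤ (p i).2) →
    (∀ i j, i < j → (p i).2 ≤ (p j).1) →
    (∑ i, ((p i).2 - (p i).1)) < δ →
    (∑ i, |g (p i).2 - g (p i).1|) < ε

open Function in
/-- inverse of a continuous injective map on compact set is continuous on image -/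
lemma aux_cont_invFunOn {v : ℝ → ℝ} {J : Set ℝ} (hJ : IsCompact J)
    (hv : ContinuousOn v J) (hinj : Set.InjOn v J) :
    ContinuousOn (Function.invFunOn v J) (v '' J) := by
  rcases J.eq_empty_or_nonempty with rfl | hne
  · simp
  haveI : CompactSpace J := isCompact_iff_compactSpace.mp hJ
  set K := v '' J with hK
  let F : J → K := fun t => ⟨v t, mem_image_of_mem _ t.2⟩
  have hFc : Continuous F := by
    apply Continuous.subtype_mk
    exact hv.restrict
  have hFbij : Function.Bijective F := by
    constructor
    · intro s t hst
      exact Subtype.ext (hinj s.2 t.2 (congrArg Subtype.val hst))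
    · rintro ⟨s, ⟨t, ht, rfl⟩⟩
      exact ⟨⟨t, ht⟩, rfl⟩
  let e : J ≃ₜ K := Continuous.homeoOfEquivCompactToT2 (f := Equiv.ofBijective F hFbij) hFc
  have hagree : ∀ s : K, Function.invFunOn v J s = (e.symm s : ℝ) := by
    intro s
    have h1 : v ((e.symm s : J) : ℝ) = (s : ℝ) := by
      have := e.apply_symm_apply s
      exact congrArg Subtype.val this
    have h2 : (s : ℝ) ∈ v '' J := s.2
    obtain ⟨a, ha, hav⟩ := h2
    have hex : ∃ t ∈ J, v t = (s : ℝ) := ⟨a, ha, hav⟩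
    apply hinj (Function.invFunOn_mem hex) (e.symm s).2
    rw [Function.invFunOn_eq hex, h1]
  rw [continuousOn_iff_continuous_restrict]
  have : K.domRestrict (Function.invFunOn v J) = fun s : K => (e.symm s : ℝ) := by
    funext s; exact hagree s
  rw [this]
  exact continuous_subtype_val.comp e.symm.continuous

open Filter Topology in
/-- derivative of an inverse function, within-set version -/
lemma aux_deriv_inv {v w : ℝ → ℝ} {J S : Set ℝ} {t m : ℝ} (ht : t ∈ J)
    (hv : HasDerivWithinAt v m J t) (hm : m ≠ 0)
    (hw : ∀ s ∈ S, w s ∈ J ∧ v (w s) = s) (hwt : w (v t) = t)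
    (hcont : ContinuousWithinAt w S (v t)) :
    HasDerivWithinAt w m⁻¹ S (v t) := by
  rw [hasDerivWithinAt_iff_tendsto_slope] at hv ⊢
  have hmap : Tendsto w (𝓝[S \ {v t}] (v t)) (𝓝[J \ {t}] t) := by
    rw [tendsto_nhdsWithin_iff]
    constructor
    · have := hcont.tendsto
      rw [hwt] at this
      exact this.mono_left (nhdsWithin_mono _ diff_subset)
    · filter_upwards [self_mem_nhdsWithin] with s hs
      refine ⟨(hw s hs.1).1, ?_⟩
      intro hwst
      apply hs.2
      have : v (w s) = s := (hw s hs.1).2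
      rw [hwst] at this
      exact mem_singleton_iff.2 this.symm
  have h1 : Tendsto (fun s => (slope v t (w s))⁻¹) (𝓝[S \ {v t}] (v t)) (𝓝 m⁻¹) :=
    ((hv.comp hmap).inv₀ hm)
  apply h1.congr'
  filter_upwards [self_mem_nhdsWithin] with s hs
  have hvw : v (w s) = s := (hw s hs.1).2
  rw [slope_def_field, slope_def_field, hvw, hwt, inv_div]

open Filter Topology Asymptotics in
/-- derivative of `‖f'∘-‖` via Gâteaux differentiability of the norm -/
lemma aux_norm_deriv {X : Type*} [NormedAddCommGroup X] [NormedSpace ℝ X]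
    {f' : ℝ → X} {e : X} {s : Set ℝ} {t : ℝ}
    (hd : HasDerivWithinAt f' e s t) {L : X →L[ℝ] ℝ}
    (hL : ∀ v : X, HasLineDerivAt ℝ (fun y : X => ‖y‖) (L v) (f' t) v) :
    HasDerivWithinAt (fun y => ‖f' y‖) (L e) s t := by
  rw [hasDerivWithinAt_iff_isLittleO] at hd ⊢
  have hψ : HasDerivAt (fun r : ℝ => ‖f' t + r • e‖) (L e) 0 := hL e
  rw [hasDerivAt_iff_isLittleO] at hψ
  simp only [zero_smul, add_zero, sub_zero, smul_eq_mul] at hψ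
  have htend : Tendsto (fun y : ℝ => y - t) (𝓝[s] t) (𝓝 0) := by
    have : Tendsto (fun y : ℝ => y - t) (𝓝 t) (𝓝 (t - t)) :=
      (continuous_id.sub continuous_const).tendsto t
    rw [sub_self] at this
    exact this.mono_left nhdsWithin_le_nhds
  have hB : (fun y => ‖f' t + (y - t) • e‖ - ‖f' t‖ - (y - t) * L e)
      =o[𝓝[s] t] fun y => y - t := by
    have := hψ.comp_tendsto htend
    exact this
  have hA : (fun y => ‖f' y‖ - ‖f' t + (y - t) • e‖) =o[𝓝[s] t] fun y => y - t := by
    refine (isBigO_of_le _ fun y => ?_).trans_isLittleO hd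
    have : |‖f' y‖ - ‖f' t + (y - t) • e‖| ≤ ‖f' y - (f' t + (y - t) • e)‖ :=
      abs_norm_sub_norm_le _ _
    calc ‖‖f' y‖ - ‖f' t + (y - t) • e‖‖ = |‖f' y‖ - ‖f' t + (y - t) • e‖| := rfl
      _ ≤ ‖f' y - (f' t + (y - t) • e)‖ := this
      _ = ‖f' y - f' t - (y - t) • e‖ := by rw [sub_add_eq_sub_sub]
  have := hA.add hB
  apply this.congr' ?_ (EventuallyEq.rfl)
  filter_upwards with y
  simp only [smul_eq_mul]
  ring

lemma aux_evar_le {X : Type*} [NormedAddCommGroup X] {f : ℝ → X} {u y : ℝ} {K : ℝ≥0}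
    (huy : u ≤ y) (hf : LipschitzOnWith K f (Set.Icc u y)) :
    eVariationOn f (Set.Icc u y) ≤ K * ENNReal.ofReal (y - u) := by
  have h1 : eVariationOn (f ∘ id) (Set.Icc u y) ≤ K * eVariationOn id (Set.Icc u y) :=
    hf.comp_eVariationOn_le (mapsTo_id _)
  have h2 : eVariationOn (id : ℝ → ℝ) (Set.Icc u y) ≤ ENNReal.ofReal (y - u) := by
    have h := MonotoneOn.eVariationOn_le (f := id) (monotoneOn_id (s := Set.Icc u y))
      (left_mem_Icc.2 huy) (right_mem_Icc.2 huy)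
    simpa using h
  calc eVariationOn f (Set.Icc u y) = eVariationOn (f ∘ id) (Set.Icc u y) := rfl
    _ ≤ K * eVariationOn id (Set.Icc u y) := h1
    _ ≤ K * ENNReal.ofReal (y - u) := by exact mul_le_mul_right h2 _

lemma aux_bv {X : Type*} [NormedAddCommGroup X] [NormedSpace ℝ X]
    {f f' : ℝ → X} {c d : ℝ}
    (hd : ∀ s ∈ Set.Icc c d, HasDerivWithinAt f (f' s) (Set.Icc c d) s)
    (hc : ContinuousOn f' (Set.Icc c d)) :
    BoundedVariationOn f (Set.Icc c d) := by
  rcases le_or_gt c d with hcd | hcd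
  · obtain ⟨M, hM⟩ := (isCompact_Icc).exists_bound_of_continuousOn hc
    set C : ℝ≥0 := ⟨max M 0, le_max_right _ _⟩ with hC
    have hlip : LipschitzOnWith C f (Set.Icc c d) := by
      apply (convex_Icc c d).lipschitzOnWith_of_nnnorm_hasDerivWithin_le hd
      intro s hs
      have : ‖f' s‖ ≤ max M 0 := le_trans (hM s hs) (le_max_left _ _)
      exact this
    have := aux_evar_le hcd hlip
    exact ne_top_of_le_ne_top (by finiteness) this
  · unfold BoundedVariationOn
    rw [Set.Icc_eq_empty (not_le.2 hcd)]
    simp [eVariationOn.subsingleton f (subsingleton_empty)]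

lemma aux_vsub {X : Type*} [NormedAddCommGroup X] {f : ℝ → X} {c d u z : ℝ}
    (hbv : BoundedVariationOn f (Set.Icc c d))
    (hu : u ∈ Set.Icc c d) (hz : z ∈ Set.Icc c d) (huz : u ≤ z) :
    (eVariationOn f (Set.Icc c z)).toReal - (eVariationOn f (Set.Icc c u)).toReal
      = (eVariationOn f (Set.Icc u z)).toReal := by
  have hadd := eVariationOn.Icc_add_Icc f (s := Set.Icc c z) hu.1 huz
    (⟨hu.1, huz⟩ : u ∈ Set.Icc c z)
  rw [Set.inter_eq_self_of_subset_right (Set.Icc_subset_Icc_right huz),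
    Set.inter_eq_self_of_subset_right (Set.Icc_subset_Icc_left hu.1),
    Set.inter_self] at hadd
  have h1 : eVariationOn f (Set.Icc c u) ≠ ⊤ :=
    ne_top_of_le_ne_top hbv (eVariationOn.mono f (Set.Icc_subset_Icc_right hu.2))
  have h2 : eVariationOn f (Set.Icc u z) ≠ ⊤ :=
    ne_top_of_le_ne_top hbv (eVariationOn.mono f (Set.Icc_subset_Icc hu.1 hz.2))
  rw [← hadd, ENNReal.toReal_add h1 h2]
  ring

open Filter Topology Asymptotics in
lemma aux_var_deriv {X : Type*} [NormedAddCommGroup X] [NormedSpace ℝ X]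
    {f f' : ℝ → X} {c d : ℝ}
    (hd : ∀ s ∈ Set.Icc c d, HasDerivWithinAt f (f' s) (Set.Icc c d) s)
    (hc : ContinuousOn f' (Set.Icc c d)) (hbv : BoundedVariationOn f (Set.Icc c d))
    {t : ℝ} (ht : t ∈ Set.Icc c d) :
    HasDerivWithinAt (fun y => (eVariationOn f (Set.Icc c y)).toReal) (‖f' t‖)
      (Set.Icc c d) t := by
  rw [hasDerivWithinAt_iff_isLittleO, Asymptotics.isLittleO_iff]
  intro ε hε
  obtain ⟨δ, hδ0, hδ⟩ := Metric.continuousWithinAt_iff.1 (hc t ht) (ε/2) (by linarith)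
  have key : ∀ u z : ℝ, u ∈ Set.Icc c d → z ∈ Set.Icc c d → u ≤ z →
      (∀ s ∈ Set.Icc u z, ‖f' s - f' t‖ ≤ ε/2) →
      |(eVariationOn f (Set.Icc u z)).toReal - (z - u) * ‖f' t‖| ≤ ε/2 * (z - u) := by
    intro u z hu hz huz hclose
    have hsub : Set.Icc u z ⊆ Set.Icc c d := Set.Icc_subset_Icc hu.1 hz.2
    have hdz : ∀ s ∈ Set.Icc u z, HasDerivWithinAt f (f' s) (Set.Icc u z) s :=
      fun s hs => (hd s (hsub hs)).mono hsub
    have hfin : eVariationOn f (Set.Icc u z) ≠ ⊤ :=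
      ne_top_of_le_ne_top hbv (eVariationOn.mono f hsub)
    set C : ℝ := ‖f' t‖ + ε/2 with hC
    have hC0 : (0:ℝ) ≤ C := by positivity
    have hlip : LipschitzOnWith ⟨C, hC0⟩ f (Set.Icc u z) := by
      apply (convex_Icc u z).lipschitzOnWith_of_nnnorm_hasDerivWithin_le hdz
      intro s hs
      show ‖f' s‖ ≤ C
      calc ‖f' s‖ = ‖f' t + (f' s - f' t)‖ := by rw [add_sub_cancel]
        _ ≤ ‖f' t‖ + ‖f' s - f' t‖ := norm_add_le _ _
        _ ≤ C := by have := hclose s hs; rw [hC]; linarith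
    have hupper : (eVariationOn f (Set.Icc u z)).toReal ≤ C * (z - u) := by
      have h := aux_evar_le huz hlip
      have h2 := ENNReal.toReal_mono (by finiteness) h
      rw [ENNReal.toReal_mul, ENNReal.toReal_ofReal (by linarith)] at h2; exact h2
    have hlower : ‖f z - f u‖ ≤ (eVariationOn f (Set.Icc u z)).toReal := by
      have h := eVariationOn.edist_le f (Set.right_mem_Icc.2 huz) (Set.left_mem_Icc.2 huz)
      have h2 := ENNReal.toReal_mono hfin h
      rwa [edist_dist, ENNReal.toReal_ofReal dist_nonneg, dist_eq_norm] at h2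
    have hiii : ‖f z - f u - (z - u) • f' t‖ ≤ ε/2 * (z - u) := by
      have hg : ∀ s ∈ Set.Icc u z,
          HasDerivWithinAt (fun y => f y - y • f' t) (f' s - f' t) (Set.Icc u z) s := by
        intro s hs
        have h1 : HasDerivWithinAt (fun y : ℝ => y • f' t) ((1:ℝ) • f' t) (Set.Icc u z) s :=
          (hasDerivWithinAt_id s _).smul_const (f' t)
        rw [one_smul] at h1
        exact (hdz s hs).sub h1
      have := (convex_Icc u z).norm_image_sub_le_of_norm_hasDerivWithin_le hg hclose
        (Set.left_mem_Icc.2 huz) (Set.right_mem_Icc.2 huz)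
      have heq : f z - z • f' t - (f u - u • f' t) = f z - f u - (z - u) • f' t := by
        rw [sub_smul]; abel
      rw [heq] at this
      calc ‖f z - f u - (z - u) • f' t‖ ≤ ε/2 * ‖z - u‖ := this
        _ = ε/2 * (z - u) := by rw [Real.norm_eq_abs, abs_of_nonneg (by linarith)]
    have hsmul : ‖(z - u) • f' t‖ = (z - u) * ‖f' t‖ := by
      rw [norm_smul, Real.norm_eq_abs, abs_of_nonneg (by linarith)]
    have hCexp : C * (z - u) = (z - u) * ‖f' t‖ + ε/2 * (z - u) := by rw [hC]; ring
    have htri : ‖(z - u) • f' t‖ ≤ ‖f z - f u‖ + ‖f z - f u - (z - u) • f' t‖ := by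
      calc ‖(z - u) • f' t‖ = ‖(f z - f u) - (f z - f u - (z - u) • f' t)‖ := by
            congr 1; abel
        _ ≤ ‖f z - f u‖ + ‖f z - f u - (z - u) • f' t‖ := norm_sub_le _ _
    rw [abs_le]
    constructor
    · rw [hsmul] at htri
      linarith
    · rw [hCexp] at hupper
      linarith
  rw [Filter.Eventually, Metric.mem_nhdsWithin_iff]
  refine ⟨δ, hδ0, ?_⟩
  rintro y ⟨hyb, hy⟩
  have hyt : |y - t| < δ := by rwa [Metric.mem_ball, Real.dist_eq] at hyb
  simp only [Set.mem_setOf_eq, smul_eq_mul, Real.norm_eq_abs]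
  rcases le_total t y with hty | hty
  · have hclose : ∀ s ∈ Set.Icc t y, ‖f' s - f' t‖ ≤ ε/2 := by
      intro s hs
      have hsmem : s ∈ Set.Icc c d := Set.Icc_subset_Icc ht.1 hy.2 hs
      have : dist s t < δ := by
        rw [Real.dist_eq, abs_of_nonneg (by linarith [hs.1])]
        have := hs.2
        calc s - t ≤ y - t := by linarith
          _ ≤ |y - t| := le_abs_self _
          _ < δ := hyt
      have := hδ hsmem this
      rw [dist_eq_norm] at this
      linarith
    have hk := key t y ht hy hty hclose
    have hv := aux_vsub hbv ht hy hty
    rw [hv.symm] at hk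
    have habs : |y - t| = y - t := abs_of_nonneg (by linarith)
    calc |(eVariationOn f (Set.Icc c y)).toReal - (eVariationOn f (Set.Icc c t)).toReal
          - (y - t) * ‖f' t‖| ≤ ε/2 * (y - t) := by
          have : (eVariationOn f (Set.Icc c y)).toReal - (eVariationOn f (Set.Icc c t)).toReal
            - (y - t) * ‖f' t‖ = ((eVariationOn f (Set.Icc c y)).toReal
              - (eVariationOn f (Set.Icc c t)).toReal) - (y - t) * ‖f' t‖ := by ring
          rw [this]; exact hk
      _ ≤ ε * |y - t| := by rw [habs]; nlinarith
  · have hclose : ∀ s ∈ Set.Icc y t, ‖f' s - f' t‖ ≤ ε/2 := by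
      intro s hs
      have hsmem : s ∈ Set.Icc c d := Set.Icc_subset_Icc hy.1 ht.2 hs
      have : dist s t < δ := by
        rw [Real.dist_eq, abs_of_nonpos (by linarith [hs.2])]
        have := hs.1
        calc -(s - t) = t - s := by ring
          _ ≤ t - y := by linarith
          _ ≤ |y - t| := by rw [abs_sub_comm]; exact le_abs_self _
          _ < δ := hyt
      have := hδ hsmem this
      rw [dist_eq_norm] at this
      linarith
    have hk := key y t hy ht hty hclose
    have hv := aux_vsub hbv hy ht hty
    rw [hv.symm] at hk
    have habs : |y - t| = t - y := by rw [abs_sub_comm]; exact abs_of_nonneg (by linarith)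
    have hre : |(eVariationOn f (Set.Icc c y)).toReal - (eVariationOn f (Set.Icc c t)).toReal
        - (y - t) * ‖f' t‖|
        = |(eVariationOn f (Set.Icc c t)).toReal - (eVariationOn f (Set.Icc c y)).toReal
          - (t - y) * ‖f' t‖| := by
      rw [← abs_neg]; congr 1; ring
    rw [hre]
    calc |(eVariationOn f (Set.Icc c t)).toReal - (eVariationOn f (Set.Icc c y)).toReal
          - (t - y) * ‖f' t‖| ≤ ε/2 * (t - y) := hk
      _ ≤ ε * |y - t| := by rw [habs]; nlinarith

/-- If `X` has a Gâteaux differentiable norm and `f : [a,b] → X` is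
twice differentiable on `[a,b]`, then `f'(x) = 0` for every `x ∈ K_f`. -/
theorem stmt15 {X : Type*} [NormedAddCommGroup X] [NormedSpace ℝ X]
    (hnorm : GateauxSmoothNorm X) {a b : ℝ} (hab : a < b) {f f' f'' : ℝ → X}
    (hdf : ∀ x ∈ Set.Icc a b, HasDerivWithinAt f (f' x) (Set.Icc a b) x)
    (hdf' : ∀ x ∈ Set.Icc a b, HasDerivWithinAt f' (f'' x) (Set.Icc a b) x) :
    ∀ x ∈ Kset f a b, f' x = 0 := by
  classical
  intro x hx
  by_contra hne
  obtain ⟨hxab, hnot⟩ := hx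
  apply hnot
  have hm : 0 < ‖f' x‖ := norm_pos_iff.2 hne
  have hcf' : ContinuousOn f' (Set.Icc a b) := fun y hy => (hdf' y hy).continuousWithinAt
  obtain ⟨δ, hδ0, hδ⟩ := Metric.continuousWithinAt_iff.1 (hcf' x hxab) (‖f' x‖/2) (by linarith)
  refine ⟨x - δ/2, x + δ/2, by linarith, by linarith, Or.inr ?_⟩
  set c' := max (x - δ/2) a with hc'
  set d' := min (x + δ/2) b with hd'
  have hc'x : c' ≤ x := max_le (by linarith) hxab.1
  have hxd' : x ≤ d' := le_min (by linarith) hxab.2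
  have hJsub : Set.Icc c' d' ⊆ Set.Icc a b :=
    Set.Icc_subset_Icc (le_max_right _ _) (min_le_right _ _)
  have hc'd' : c' < d' := by
    rcases eq_or_lt_of_le hxab.1 with h | h
    · have he : c' = a := max_eq_right (by linarith)
      have hd : x < d' := lt_min (by linarith) (lt_of_le_of_lt (le_of_eq h.symm) hab)
      rw [he, h]; exact hd
    · exact lt_of_lt_of_le (max_lt (by linarith) h) hxd'
  have hclose : ∀ s ∈ Set.Icc c' d', ‖f' s - f' x‖ < ‖f' x‖/2 := by
    intro s hs
    have h1 : x - δ/2 ≤ s := le_trans (le_max_left _ _) hs.1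
    have h2 : s ≤ x + δ/2 := le_trans hs.2 (min_le_left _ _)
    have : dist s x < δ := by
      rw [Real.dist_eq]
      have : |s - x| ≤ δ/2 := abs_le.2 ⟨by linarith, by linarith⟩
      linarith
    have := hδ (hJsub hs) this
    rwa [dist_eq_norm] at this
  have hlow : ∀ s ∈ Set.Icc c' d', ‖f' x‖/2 ≤ ‖f' s‖ := by
    intro s hs
    have h1 := hclose s hs
    have h2 : ‖f' x‖ - ‖f' s‖ ≤ ‖f' s - f' x‖ := by
      have := norm_sub_norm_le (f' x) (f' s)
      rwa [norm_sub_rev (f' x) (f' s)] at this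
    linarith
  have hne' : ∀ s ∈ Set.Icc c' d', f' s ≠ 0 := by
    intro s hs h0
    have := hlow s hs
    rw [h0, norm_zero] at this
    linarith
  have hdJ : ∀ s ∈ Set.Icc c' d', HasDerivWithinAt f (f' s) (Set.Icc c' d') s :=
    fun s hs => (hdf s (hJsub hs)).mono hJsub
  have hcJ : ContinuousOn f' (Set.Icc c' d') := hcf'.mono hJsub
  have hbv : BoundedVariationOn f (Set.Icc c' d') := aux_bv hdJ hcJ
  set v : ℝ → ℝ := fun y => (eVariationOn f (Set.Icc c' y)).toReal with hvdef
  have hvd : ∀ t ∈ Set.Icc c' d', HasDerivWithinAt v (‖f' t‖) (Set.Icc c' d') t :=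
    fun t ht => aux_var_deriv hdJ hcJ hbv ht
  have hvc : ContinuousOn v (Set.Icc c' d') := fun t ht => (hvd t ht).continuousWithinAt
  have hmono : StrictMonoOn v (Set.Icc c' d') := by
    apply strictMonoOn_of_hasDerivWithinAt_pos (f' := fun t => ‖f' t‖)
      (convex_Icc c' d') hvc
    · intro t ht
      exact (hvd t (interior_subset ht)).mono interior_subset
    · intro t ht
      exact norm_pos_iff.2 (hne' t (interior_subset ht))
  have h0 : v c' = 0 := by
    show (eVariationOn f (Set.Icc c' c')).toReal = 0
    rw [Set.Icc_self, eVariationOn.subsingleton f Set.subsingleton_singleton]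
    rfl
  set V := v d' with hV
  have hmonoOn := hmono.monotoneOn
  have hmaps : Set.MapsTo v (Set.Icc c' d') (Set.Icc 0 V) := by
    intro t ht
    constructor
    · rw [← h0]; exact hmonoOn (Set.left_mem_Icc.2 hc'd'.le) ht ht.1
    · exact hmonoOn ht (Set.right_mem_Icc.2 hc'd'.le) ht.2
  have hsurj : Set.Icc 0 V ⊆ v '' Set.Icc c' d' := by
    rw [← h0]; exact intermediate_value_Icc hc'd'.le hvc
  have hinj := hmono.injOn
  set w := Function.invFunOn v (Set.Icc c' d') with hwdef
  have hwmem : ∀ s ∈ Set.Icc 0 V, w s ∈ Set.Icc c' d' ∧ v (w s) = s := by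
    intro s hs
    obtain ⟨tt, htt, hvt⟩ := hsurj hs
    exact ⟨Function.invFunOn_mem ⟨tt, htt, hvt⟩, Function.invFunOn_eq ⟨tt, htt, hvt⟩⟩
  have hwv : ∀ t ∈ Set.Icc c' d', w (v t) = t := fun t ht => hinj.leftInvOn_invFunOn ht
  have hwcont : ContinuousOn w (Set.Icc 0 V) :=
    (aux_cont_invFunOn isCompact_Icc hvc hinj).mono hsurj
  have hwd : ∀ s ∈ Set.Icc 0 V, HasDerivWithinAt w ((‖f' (w s)‖)⁻¹) (Set.Icc 0 V) s := by
    intro s hs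
    obtain ⟨hwJ, hvw⟩ := hwmem s hs
    have hcw : ContinuousWithinAt w (Set.Icc 0 V) (v (w s)) := by
      rw [hvw]; exact hwcont s hs
    have := aux_deriv_inv hwJ (hvd (w s) hwJ)
      (ne_of_gt (norm_pos_iff.2 (hne' (w s) hwJ))) hwmem (hwv _ hwJ) hcw
    rwa [hvw] at this
  set φd : ℝ → ℝ := fun t =>
    if h : f' t = 0 then 0 else (Classical.choose (hnorm (f' t) h)) (f'' t) with hφdef
  have hφd : ∀ t ∈ Set.Icc c' d',
      HasDerivWithinAt (fun y => ‖f' y‖) (φd t) (Set.Icc c' d') t := by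
    intro t ht
    have h := hne' t ht
    have : φd t = (Classical.choose (hnorm (f' t) h)) (f'' t) := by
      rw [hφdef]; simp only [dif_neg h]
    rw [this]
    exact aux_norm_deriv ((hdf' t (hJsub ht)).mono hJsub)
      (Classical.choose_spec (hnorm (f' t) h))
  set w' : ℝ → ℝ := fun s => (‖f' (w s)‖)⁻¹ with hw'def
  have hmapsw : Set.MapsTo w (Set.Icc 0 V) (Set.Icc c' d') := fun s hs => (hwmem s hs).1
  have hmapswab : Set.MapsTo w (Set.Icc 0 V) (Set.Icc a b) := fun s hs => hJsub ((hwmem s hs).1)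
  have hVfn : vfn f c' d' = V := rfl
  refine ⟨hbv, fun s => f (w s),
    ⟨(fun s => w' s • f' (w s)),
     (fun s => w' s • (w' s • f'' (w s)) + (-(φd (w s) * w' s) / ‖f' (w s)‖ ^ 2) • f' (w s)),
     ?_, ?_⟩, ?_⟩
  · rw [hVfn]
    intro s hs
    exact HasDerivWithinAt.scomp s (hdf (w s) (hmapswab hs)) (hwd s hs) hmapswab
  · rw [hVfn]
    intro s hs
    have hwJ := (hwmem s hs).1
    have h1 : HasDerivWithinAt (fun y => f' (w y)) (w' s • f'' (w s)) (Set.Icc 0 V) s :=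
      HasDerivWithinAt.scomp s (hdf' (w s) (hJsub hwJ)) (hwd s hs) hmapswab
    have h2 : HasDerivWithinAt (fun y => ‖f' (w y)‖) (φd (w s) * w' s) (Set.Icc 0 V) s :=
      HasDerivWithinAt.comp s (hφd (w s) hwJ) (hwd s hs) hmapsw
    have h3 : HasDerivWithinAt w' (-(φd (w s) * w' s) / ‖f' (w s)‖ ^ 2) (Set.Icc 0 V) s :=
      h2.inv (ne_of_gt (norm_pos_iff.2 (hne' (w s) hwJ)))
    exact h3.smul h1
  · intro y hy
    show f (w (v y)) = f y
    rw [hwv y hy]
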